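/- arXiv:1208.4081 — 3 statements merged into one kernel-verified Lean document; each statement's English description precedes it below -/
import Mathlib

section
/- Superadditivity of anisotropy with respect to partitioning: if f is a joint probability density on ℝ^{ℓ₁} × ℝ^{ℓ₂} with finite positive second moment and finite differential entropy, and f₁, f₂ are its marginal densities on ℝ^{ℓ₁} and ℝ^{ℓ₂} (each with finite positive second moment and finite differential entropy), then A(f) ≥ A(f₁) + A(f₂). -/
open MeasureTheory Real Matrix

/-- Second moment `E_f = ∫ |w|² f(w) dw` of a density on `ℝ^ℓ`. -/
noncomputable def Ef (ℓ : ℕ) (f : (Fin ℓ → ℝ) → ℝ) : ℝ :=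
  ∫ w : Fin ℓ → ℝ, (∑ i, (w i)^2) * f w

/-- Differential entropy `h(f) = −∫ f ln f`. -/
noncomputable def dEnt (ℓ : ℕ) (f : (Fin ℓ → ℝ) → ℝ) : ℝ :=
  -∫ w : Fin ℓ → ℝ, f w * Real.log (f w)

/-- Anisotropy `A(f) = (ℓ/2)·ln(2πe·E_f/ℓ) − h(f)`. -/
noncomputable def aniso (ℓ : ℕ) (f : (Fin ℓ → ℝ) → ℝ) : ℝ :=
  ((ℓ : ℝ) / 2) * Real.log (2 * π * Real.exp 1 * Ef ℓ f / ℓ) - dEnt ℓ f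

/-- A probability density on `ℝ^ℓ` with finite positive second moment and
finite differential entropy. -/
structure IsGoodDensity (ℓ : ℕ) (f : (Fin ℓ → ℝ) → ℝ) : Prop where
  nonneg : ∀ w, 0 ≤ f w
  integrable : Integrable f
  total : (∫ w, f w) = 1
  moment_integrable : Integrable (fun w : Fin ℓ → ℝ => (∑ i, (w i)^2) * f w)
  moment_pos : 0 < Ef ℓ f
  entropy_integrable : Integrable (fun w : Fin ℓ → ℝ => f w * Real.log (f w))

/-- Second moment of a joint density on `ℝ^{ℓ₁} × ℝ^{ℓ₂}`. -/
noncomputable def Ef2 (ℓ₁ ℓ₂ : ℕ) (f : (Fin ℓ₁ → ℝ) × (Fin ℓ₂ → ℝ) → ℝ) : ℝ :=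
  ∫ p : (Fin ℓ₁ → ℝ) × (Fin ℓ₂ → ℝ), ((∑ i, (p.1 i)^2) + ∑ j, (p.2 j)^2) * f p

/-- Differential entropy of a joint density on `ℝ^{ℓ₁} × ℝ^{ℓ₂}`. -/
noncomputable def dEnt2 (ℓ₁ ℓ₂ : ℕ) (f : (Fin ℓ₁ → ℝ) × (Fin ℓ₂ → ℝ) → ℝ) : ℝ :=
  -∫ p : (Fin ℓ₁ → ℝ) × (Fin ℓ₂ → ℝ), f p * Real.log (f p)

/-- Anisotropy of a joint density on `ℝ^{ℓ₁} × ℝ^{ℓ₂}` (a copy of `ℝ^{ℓ₁+ℓ₂}`). -/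
noncomputable def aniso2 (ℓ₁ ℓ₂ : ℕ) (f : (Fin ℓ₁ → ℝ) × (Fin ℓ₂ → ℝ) → ℝ) : ℝ :=
  (((ℓ₁ : ℝ) + ℓ₂) / 2) * Real.log (2 * π * Real.exp 1 * Ef2 ℓ₁ ℓ₂ f / ((ℓ₁ : ℝ) + ℓ₂)) -
    dEnt2 ℓ₁ ℓ₂ f

/-- A joint probability density on `ℝ^{ℓ₁} × ℝ^{ℓ₂}` with finite positive second
moment and finite differential entropy. -/
structure IsGoodDensity2 (ℓ₁ ℓ₂ : ℕ) (f : (Fin ℓ₁ → ℝ) × (Fin ℓ₂ → ℝ) → ℝ) : Prop where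
  nonneg : ∀ p, 0 ≤ f p
  integrable : Integrable f
  total : (∫ p, f p) = 1
  moment_integrable :
    Integrable (fun p : (Fin ℓ₁ → ℝ) × (Fin ℓ₂ → ℝ) => ((∑ i, (p.1 i)^2) + ∑ j, (p.2 j)^2) * f p)
  moment_pos : 0 < Ef2 ℓ₁ ℓ₂ f
  entropy_integrable :
    Integrable (fun p : (Fin ℓ₁ → ℝ) × (Fin ℓ₂ → ℝ) => f p * Real.log (f p))


variable {α β : Type*} [MeasurableSpace α] [MeasurableSpace β]
  {μ : Measure α} {ν : Measure β} [SigmaFinite μ] [SigmaFinite ν]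

lemma marg_lint' {f : α × β → ℝ} {f₁ : α → ℝ}
    (hfi : Integrable f (μ.prod ν)) (hnn : ∀ p, 0 ≤ f p)
    (hm : ∀ x, f₁ x = ∫ y, f (x, y) ∂ν) :
    ∀ᵐ x ∂μ, ∫⁻ y, ENNReal.ofReal (f (x, y)) ∂ν = ENNReal.ofReal (f₁ x) := by
  filter_upwards [hfi.prod_right_ae] with x hx
  rw [hm x, ofReal_integral_eq_lintegral_ofReal hx (Filter.Eventually.of_forall fun y => hnn _)]

lemma mul_log_fst {f : α × β → ℝ} {f₁ : α → ℝ}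
    (hfi : Integrable f (μ.prod ν)) (hnn : ∀ p, 0 ≤ f p)
    (hf₁i : Integrable f₁ μ) (hf₁nn : ∀ x, 0 ≤ f₁ x)
    (hent : Integrable (fun x => f₁ x * Real.log (f₁ x)) μ)
    (hm : ∀ x, f₁ x = ∫ y, f (x, y) ∂ν) :
    Integrable (fun p => f p * Real.log (f₁ p.1)) (μ.prod ν) ∧
      ∫ p, f p * Real.log (f₁ p.1) ∂μ.prod ν = ∫ x, f₁ x * Real.log (f₁ x) ∂μ := by
  have hlm : AEStronglyMeasurable (fun p : α × β => Real.log (f₁ p.1)) (μ.prod ν) :=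
    AEStronglyMeasurable.comp_fst
      (measurable_log.comp_aemeasurable hf₁i.aestronglyMeasurable.aemeasurable).aestronglyMeasurable
  have hsm : AEStronglyMeasurable (fun p => f p * Real.log (f₁ p.1)) (μ.prod ν) :=
    hfi.aestronglyMeasurable.mul hlm
  have hint : Integrable (fun p => f p * Real.log (f₁ p.1)) (μ.prod ν) := by
    refine ⟨hsm, ?_⟩
    show ∫⁻ p, ↑‖f p * Real.log (f₁ p.1)‖₊ ∂(μ.prod ν) < ⊤
    have haem : AEMeasurable (fun p : α × β => (‖f p * Real.log (f₁ p.1)‖₊ : ENNReal)) (μ.prod ν) :=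
      hsm.aemeasurable.enorm
    rw [lintegral_prod _ haem]
    have key : ∀ᵐ x ∂μ, ∫⁻ y, (‖f (x, y) * Real.log (f₁ x)‖₊ : ENNReal) ∂ν
        = ↑‖f₁ x * Real.log (f₁ x)‖₊ := by
      filter_upwards [marg_lint' hfi hnn hm] with x hx
      have : ∀ y : β, (‖f (x, y) * Real.log (f₁ x)‖₊ : ENNReal)
          = ENNReal.ofReal (f (x, y)) * ↑‖Real.log (f₁ x)‖₊ := by
        intro y
        rw [nnnorm_mul, ENNReal.coe_mul, ← enorm_eq_nnnorm (f (x, y)), Real.enorm_eq_ofReal (hnn _)]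
      simp_rw [this]
      rw [lintegral_mul_const' _ _ ENNReal.coe_ne_top, hx,
        nnnorm_mul, ENNReal.coe_mul, ← enorm_eq_nnnorm (f₁ x), Real.enorm_eq_ofReal (hf₁nn x)]
    rw [lintegral_congr_ae key]
    exact hent.hasFiniteIntegral
  refine ⟨hint, ?_⟩
  rw [integral_prod _ hint]
  refine integral_congr_ae (Filter.Eventually.of_forall fun x => ?_)
  show ∫ y, f (x, y) * Real.log (f₁ x) ∂ν = f₁ x * Real.log (f₁ x)
  rw [integral_mul_const, ← hm x]

lemma marg_lint_snd' {f : α × β → ℝ} {f₂ : β → ℝ}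
    (hfi : Integrable f (μ.prod ν)) (hnn : ∀ p, 0 ≤ f p)
    (hm : ∀ y, f₂ y = ∫ x, f (x, y) ∂μ) :
    ∀ᵐ y ∂ν, ∫⁻ x, ENNReal.ofReal (f (x, y)) ∂μ = ENNReal.ofReal (f₂ y) := by
  filter_upwards [hfi.prod_left_ae] with y hy
  rw [hm y, ofReal_integral_eq_lintegral_ofReal hy (Filter.Eventually.of_forall fun x => hnn _)]

lemma mul_log_snd {f : α × β → ℝ} {f₂ : β → ℝ}
    (hfi : Integrable f (μ.prod ν)) (hnn : ∀ p, 0 ≤ f p)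
    (hf₂i : Integrable f₂ ν) (hf₂nn : ∀ y, 0 ≤ f₂ y)
    (hent : Integrable (fun y => f₂ y * Real.log (f₂ y)) ν)
    (hm : ∀ y, f₂ y = ∫ x, f (x, y) ∂μ) :
    Integrable (fun p => f p * Real.log (f₂ p.2)) (μ.prod ν) ∧
      ∫ p, f p * Real.log (f₂ p.2) ∂μ.prod ν = ∫ y, f₂ y * Real.log (f₂ y) ∂ν := by
  have hlm : AEStronglyMeasurable (fun p : α × β => Real.log (f₂ p.2)) (μ.prod ν) :=
    AEStronglyMeasurable.comp_snd
      (measurable_log.comp_aemeasurable hf₂i.aestronglyMeasurable.aemeasurable).aestronglyMeasurable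
  have hsm : AEStronglyMeasurable (fun p => f p * Real.log (f₂ p.2)) (μ.prod ν) :=
    hfi.aestronglyMeasurable.mul hlm
  have hint : Integrable (fun p => f p * Real.log (f₂ p.2)) (μ.prod ν) := by
    refine ⟨hsm, ?_⟩
    show ∫⁻ p, ↑‖f p * Real.log (f₂ p.2)‖₊ ∂(μ.prod ν) < ⊤
    have haem : AEMeasurable (fun p : α × β => (‖f p * Real.log (f₂ p.2)‖₊ : ENNReal)) (μ.prod ν) :=
      hsm.aemeasurable.enorm
    rw [lintegral_prod_symm _ haem]
    have key : ∀ᵐ y ∂ν, ∫⁻ x, (‖f (x, y) * Real.log (f₂ y)‖₊ : ENNReal) ∂μ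
        = ↑‖f₂ y * Real.log (f₂ y)‖₊ := by
      filter_upwards [marg_lint_snd' hfi hnn hm] with y hy
      have : ∀ x : α, (‖f (x, y) * Real.log (f₂ y)‖₊ : ENNReal)
          = ENNReal.ofReal (f (x, y)) * ↑‖Real.log (f₂ y)‖₊ := by
        intro x
        rw [nnnorm_mul, ENNReal.coe_mul, ← enorm_eq_nnnorm (f (x, y)), Real.enorm_eq_ofReal (hnn _)]
      simp_rw [this]
      rw [lintegral_mul_const' _ _ ENNReal.coe_ne_top, hy,
        nnnorm_mul, ENNReal.coe_mul, ← enorm_eq_nnnorm (f₂ y), Real.enorm_eq_ofReal (hf₂nn y)]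
    rw [lintegral_congr_ae key]
    exact hent.hasFiniteIntegral
  refine ⟨hint, ?_⟩
  rw [integral_prod_symm _ hint]
  refine integral_congr_ae (Filter.Eventually.of_forall fun y => ?_)
  show ∫ x, f (x, y) * Real.log (f₂ y) ∂μ = f₂ y * Real.log (f₂ y)
  rw [integral_mul_const, ← hm y]
lemma vanish_fst {f : α × β → ℝ} {f₁ : α → ℝ}
    (hfi : Integrable f (μ.prod ν)) (hnn : ∀ p, 0 ≤ f p)
    (hf₁i : Integrable f₁ μ)
    (hm : ∀ x, f₁ x = ∫ y, f (x, y) ∂ν) :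
    ∀ᵐ p ∂μ.prod ν, f₁ p.1 = 0 → f p = 0 := by
  obtain ⟨g₁, hg₁sm, hg₁ae⟩ := hf₁i.aestronglyMeasurable
  set N : Set α := {x | g₁ x = 0} with hN
  have hNm : MeasurableSet N := hg₁sm.measurable (measurableSet_singleton 0)
  have hprod : ((μ.restrict N).prod ν) = (μ.prod ν).restrict (N ×ˢ Set.univ) := by
    rw [← Measure.prod_restrict, Measure.restrict_univ]
  have haem : AEMeasurable (fun p => ENNReal.ofReal (f p)) ((μ.restrict N).prod ν) := by
    rw [hprod]
    exact (hfi.aestronglyMeasurable.aemeasurable.ennreal_ofReal).restrict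
  have hz : ∫⁻ p, ENNReal.ofReal (f p) ∂((μ.restrict N).prod ν) = 0 := by
    rw [lintegral_prod _ haem]
    have h1 : ∀ᵐ x ∂μ.restrict N,
        ∫⁻ y, ENNReal.ofReal (f (x, y)) ∂ν = ENNReal.ofReal (f₁ x) :=
      ae_restrict_of_ae (marg_lint' hfi hnn hm)
    have h2 : ∀ᵐ x ∂μ.restrict N, f₁ x = g₁ x := ae_restrict_of_ae hg₁ae
    have h3 : ∀ᵐ x ∂μ.restrict N, x ∈ N := ae_restrict_mem hNm
    rw [lintegral_congr_ae (h1.mp (h2.mp (h3.mono fun x hx h2 h1 => by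
      rw [h1, h2, hx])))]
    simp
  have hz2 : ∀ᵐ p ∂(μ.prod ν).restrict (N ×ˢ Set.univ), ENNReal.ofReal (f p) = 0 := by
    rw [← hprod]
    exact (lintegral_eq_zero_iff' haem).mp hz
  rw [ae_restrict_iff' (hNm.prod MeasurableSet.univ)] at hz2
  have hlift : ∀ᵐ p ∂μ.prod ν, f₁ p.1 = g₁ p.1 :=
    Measure.quasiMeasurePreserving_fst.ae_eq_comp hg₁ae
  filter_upwards [hz2, hlift] with p hp hpe h0
  have : p ∈ N ×ˢ (Set.univ : Set β) := ⟨by rw [hN]; simp [← hpe, h0], trivial⟩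
  have := hp this
  rw [ENNReal.ofReal_eq_zero] at this
  exact le_antisymm this (hnn p)

lemma vanish_snd {f : α × β → ℝ} {f₂ : β → ℝ}
    (hfi : Integrable f (μ.prod ν)) (hnn : ∀ p, 0 ≤ f p)
    (hf₂i : Integrable f₂ ν)
    (hm : ∀ y, f₂ y = ∫ x, f (x, y) ∂μ) :
    ∀ᵐ p ∂μ.prod ν, f₂ p.2 = 0 → f p = 0 := by
  have hswap : Integrable (f ∘ Prod.swap) (ν.prod μ) := hfi.swap
  have h := vanish_fst (f := f ∘ Prod.swap) (f₁ := f₂) hswap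
    (fun q => hnn _) hf₂i (fun y => hm y)
  have htend := (Measure.measurePreserving_swap (μ := μ) (ν := ν)).quasiMeasurePreserving.tendsto_ae
  have := htend.eventually h
  filter_upwards [this] with p hp h0
  exact hp h0

lemma entropy_subadd {f : α × β → ℝ} {f₁ : α → ℝ} {f₂ : β → ℝ}
    (hnn : ∀ p, 0 ≤ f p) (hfi : Integrable f (μ.prod ν)) (htot : ∫ p, f p ∂μ.prod ν = 1)
    (hentf : Integrable (fun p => f p * Real.log (f p)) (μ.prod ν))
    (hf₁nn : ∀ x, 0 ≤ f₁ x) (hf₁i : Integrable f₁ μ) (htot₁ : ∫ x, f₁ x ∂μ = 1)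
    (hent₁ : Integrable (fun x => f₁ x * Real.log (f₁ x)) μ)
    (hf₂nn : ∀ y, 0 ≤ f₂ y) (hf₂i : Integrable f₂ ν) (htot₂ : ∫ y, f₂ y ∂ν = 1)
    (hent₂ : Integrable (fun y => f₂ y * Real.log (f₂ y)) ν)
    (hm₁ : ∀ x, f₁ x = ∫ y, f (x, y) ∂ν) (hm₂ : ∀ y, f₂ y = ∫ x, f (x, y) ∂μ) :
    ∫ x, f₁ x * Real.log (f₁ x) ∂μ + ∫ y, f₂ y * Real.log (f₂ y) ∂ν
      ≤ ∫ p, f p * Real.log (f p) ∂μ.prod ν := by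
  obtain ⟨hi₁, he₁⟩ := mul_log_fst hfi hnn hf₁i hf₁nn hent₁ hm₁
  obtain ⟨hi₂, he₂⟩ := mul_log_snd hfi hnn hf₂i hf₂nn hent₂ hm₂
  set g : α × β → ℝ :=
    fun p => f p * Real.log (f p) - f p * Real.log (f₁ p.1) - f p * Real.log (f₂ p.2) with hg
  have hgi : Integrable g (μ.prod ν) := (hentf.sub hi₁).sub hi₂
  have hprodi : Integrable (fun p : α × β => f₁ p.1 * f₂ p.2) (μ.prod ν) :=
    hf₁i.mul_prod hf₂i
  have hbound : ∀ᵐ p ∂μ.prod ν, f p - f₁ p.1 * f₂ p.2 ≤ g p := by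
    filter_upwards [vanish_fst hfi hnn hf₁i hm₁, vanish_snd hfi hnn hf₂i hm₂] with p h1 h2
    set a := f₁ p.1; set b := f₂ p.2; set t := f p
    rcases eq_or_lt_of_le (hnn p) with ht | ht
    · simp only [hg, ← ht]
      simp
      nlinarith [hf₁nn p.1, hf₂nn p.2]
    · have ha : 0 < a := lt_of_le_of_ne (hf₁nn p.1) fun h => by
        exact absurd (h1 h.symm) (ne_of_gt ht)
      have hb : 0 < b := lt_of_le_of_ne (hf₂nn p.2) fun h => by
        exact absurd (h2 h.symm) (ne_of_gt ht)
      have hlog := Real.log_le_sub_one_of_pos (div_pos (mul_pos ha hb) ht)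
      rw [Real.log_div (ne_of_gt (mul_pos ha hb)) (ne_of_gt ht),
        Real.log_mul (ne_of_gt ha) (ne_of_gt hb)] at hlog
      have h' := mul_le_mul_of_nonneg_left hlog ht.le
      have hc : t * (a * b / t) = a * b := by have : t ≠ 0 := ne_of_gt ht; field_simp
      simp only [hg]
      nlinarith [h', hc]
  have hint : ∫ p, (f p - f₁ p.1 * f₂ p.2) ∂μ.prod ν = 0 := by
    rw [integral_sub hfi hprodi, htot, integral_prod_mul f₁ f₂, htot₁, htot₂]
    ring
  have hmono := integral_mono_ae (f := fun p => f p - f₁ p.1 * f₂ p.2) (g := g)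
    (hfi.sub hprodi) hgi hbound
  rw [hint] at hmono
  have hsplit : ∫ p, g p ∂μ.prod ν
      = ∫ p, f p * Real.log (f p) ∂μ.prod ν
        - ∫ p, f p * Real.log (f₁ p.1) ∂μ.prod ν
        - ∫ p, f p * Real.log (f₂ p.2) ∂μ.prod ν := by
    simp only [hg]
    rw [integral_sub (f := fun p => f p * Real.log (f p) - f p * Real.log (f₁ p.1))
      (g := fun p => f p * Real.log (f₂ p.2)) (hentf.sub hi₁) hi₂]
    rw [integral_sub hentf hi₁]
  rw [hsplit, he₁, he₂] at hmono
  linarith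

lemma moment_split {f : α × β → ℝ} {f₁ : α → ℝ} {f₂ : β → ℝ} {A : α → ℝ} {B : β → ℝ}
    (hA : Measurable A) (hAnn : ∀ x, 0 ≤ A x) (hB : Measurable B) (hBnn : ∀ y, 0 ≤ B y)
    (hnn : ∀ p, 0 ≤ f p) (hfi : Integrable f (μ.prod ν))
    (hmom : Integrable (fun p => (A p.1 + B p.2) * f p) (μ.prod ν))
    (hm₁ : ∀ x, f₁ x = ∫ y, f (x, y) ∂ν) (hm₂ : ∀ y, f₂ y = ∫ x, f (x, y) ∂μ) :
    ∫ p, (A p.1 + B p.2) * f p ∂μ.prod ν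
      = ∫ x, A x * f₁ x ∂μ + ∫ y, B y * f₂ y ∂ν := by
  have h1 : Integrable (fun p => A p.1 * f p) (μ.prod ν) := by
    refine hmom.mono (((hA.comp measurable_fst).aestronglyMeasurable).mul
      hfi.aestronglyMeasurable) (Filter.Eventually.of_forall fun p => ?_)
    rw [Real.norm_eq_abs, Real.norm_eq_abs, abs_of_nonneg (mul_nonneg (hAnn _) (hnn _)),
      abs_of_nonneg (mul_nonneg (add_nonneg (hAnn _) (hBnn _)) (hnn _))]
    nlinarith [hAnn p.1, hBnn p.2, hnn p]
  have h2 : Integrable (fun p => B p.2 * f p) (μ.prod ν) := by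
    refine hmom.mono (((hB.comp measurable_snd).aestronglyMeasurable).mul
      hfi.aestronglyMeasurable) (Filter.Eventually.of_forall fun p => ?_)
    rw [Real.norm_eq_abs, Real.norm_eq_abs, abs_of_nonneg (mul_nonneg (hBnn _) (hnn _)),
      abs_of_nonneg (mul_nonneg (add_nonneg (hAnn _) (hBnn _)) (hnn _))]
    nlinarith [hAnn p.1, hBnn p.2, hnn p]
  have hsum : ∫ p, (A p.1 + B p.2) * f p ∂μ.prod ν
      = ∫ p, A p.1 * f p ∂μ.prod ν + ∫ p, B p.2 * f p ∂μ.prod ν := by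
    simp_rw [add_mul]
    exact integral_add h1 h2
  rw [hsum]
  congr 1
  · rw [integral_prod _ h1]
    refine integral_congr_ae (Filter.Eventually.of_forall fun x => ?_)
    show ∫ y, A x * f (x, y) ∂ν = A x * f₁ x
    rw [integral_const_mul, ← hm₁ x]
  · rw [integral_prod_symm _ h2]
    refine integral_congr_ae (Filter.Eventually.of_forall fun y => ?_)
    show ∫ x, B y * f (x, y) ∂μ = B y * f₂ y
    rw [integral_const_mul, ← hm₂ y]

lemma log_concavg {n₁ n₂ E₁ E₂ c : ℝ} (hn₁ : 0 < n₁) (hn₂ : 0 < n₂)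
    (hE₁ : 0 < E₁) (hE₂ : 0 < E₂) (hc : 0 < c) :
    n₁ / 2 * Real.log (c * E₁ / n₁) + n₂ / 2 * Real.log (c * E₂ / n₂)
      ≤ (n₁ + n₂) / 2 * Real.log (c * (E₁ + E₂) / (n₁ + n₂)) := by
  have hn : (0:ℝ) < n₁ + n₂ := by positivity
  have hp₁ : (0:ℝ) < c * E₁ / n₁ := by positivity
  have hp₂ : (0:ℝ) < c * E₂ / n₂ := by positivity
  have hw : n₁ / (n₁ + n₂) + n₂ / (n₁ + n₂) = 1 := by field_simp
  have hgm := Real.geom_mean_le_arith_mean2_weighted (by positivity) (by positivity)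
    hp₁.le hp₂.le hw
  have hlog := Real.log_le_log (by positivity) hgm
  rw [Real.log_mul (ne_of_gt (Real.rpow_pos_of_pos hp₁ _))
      (ne_of_gt (Real.rpow_pos_of_pos hp₂ _)),
    Real.log_rpow hp₁, Real.log_rpow hp₂] at hlog
  have harith : n₁ / (n₁ + n₂) * (c * E₁ / n₁) + n₂ / (n₁ + n₂) * (c * E₂ / n₂)
      = c * (E₁ + E₂) / (n₁ + n₂) := by
    field_simp
  rw [harith] at hlog
  have hmul := mul_le_mul_of_nonneg_left hlog (by positivity : (0:ℝ) ≤ (n₁ + n₂) / 2)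
  have hrw : (n₁ + n₂) / 2 * (n₁ / (n₁ + n₂) * Real.log (c * E₁ / n₁)
        + n₂ / (n₁ + n₂) * Real.log (c * E₂ / n₂))
      = n₁ / 2 * Real.log (c * E₁ / n₁) + n₂ / 2 * Real.log (c * E₂ / n₂) := by
    field_simp
  rw [hrw] at hmul
  linarith

/-- Superadditivity of the anisotropy with respect to partitioning:
`A(f) ≥ A(f₁) + A(f₂)` for the marginal densities `f₁, f₂` of a joint density `f`. -/
theorem anisotropy_superadditive
    (ℓ₁ ℓ₂ : ℕ) (hℓ₁ : 1 ≤ ℓ₁) (hℓ₂ : 1 ≤ ℓ₂)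
    (f : (Fin ℓ₁ → ℝ) × (Fin ℓ₂ → ℝ) → ℝ)
    (f₁ : (Fin ℓ₁ → ℝ) → ℝ) (f₂ : (Fin ℓ₂ → ℝ) → ℝ)
    (hf : IsGoodDensity2 ℓ₁ ℓ₂ f)
    (hf₁ : IsGoodDensity ℓ₁ f₁) (hf₂ : IsGoodDensity ℓ₂ f₂)
    (hmarg₁ : ∀ x : Fin ℓ₁ → ℝ, f₁ x = ∫ y : Fin ℓ₂ → ℝ, f (x, y))
    (hmarg₂ : ∀ y : Fin ℓ₂ → ℝ, f₂ y = ∫ x : Fin ℓ₁ → ℝ, f (x, y)) :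
    aniso ℓ₁ f₁ + aniso ℓ₂ f₂ ≤ aniso2 ℓ₁ ℓ₂ f := by
  have hprod : (volume : Measure ((Fin ℓ₁ → ℝ) × (Fin ℓ₂ → ℝ)))
      = (volume : Measure (Fin ℓ₁ → ℝ)).prod (volume : Measure (Fin ℓ₂ → ℝ)) :=
    Measure.volume_eq_prod _ _
  have hfi : Integrable f ((volume : Measure (Fin ℓ₁ → ℝ)).prod volume) := by
    rw [← hprod]; exact hf.integrable
  have htot : ∫ p, f p ∂((volume : Measure (Fin ℓ₁ → ℝ)).prod volume) = 1 := by
    rw [← hprod]; exact hf.total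
  have hentf : Integrable (fun p => f p * Real.log (f p))
      ((volume : Measure (Fin ℓ₁ → ℝ)).prod volume) := by
    rw [← hprod]; exact hf.entropy_integrable
  have hmomf : Integrable (fun p : (Fin ℓ₁ → ℝ) × (Fin ℓ₂ → ℝ) =>
      ((∑ i, (p.1 i)^2) + ∑ j, (p.2 j)^2) * f p)
      ((volume : Measure (Fin ℓ₁ → ℝ)).prod volume) := by
    rw [← hprod]; exact hf.moment_integrable
  have hA : Measurable fun x : Fin ℓ₁ → ℝ => ∑ i, (x i)^2 :=
    Finset.measurable_sum _ fun i _ => (measurable_pi_apply i).pow_const 2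
  have hB : Measurable fun y : Fin ℓ₂ → ℝ => ∑ j, (y j)^2 :=
    Finset.measurable_sum _ fun j _ => (measurable_pi_apply j).pow_const 2
  have hE : Ef2 ℓ₁ ℓ₂ f = Ef ℓ₁ f₁ + Ef ℓ₂ f₂ := by
    unfold Ef2 Ef
    rw [hprod]
    exact moment_split hA (fun x => Finset.sum_nonneg fun i _ => sq_nonneg _)
      hB (fun y => Finset.sum_nonneg fun j _ => sq_nonneg _)
      hf.nonneg hfi hmomf hmarg₁ hmarg₂
  have hEnt : dEnt2 ℓ₁ ℓ₂ f ≤ dEnt ℓ₁ f₁ + dEnt ℓ₂ f₂ := by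
    unfold dEnt2 dEnt
    have := entropy_subadd hf.nonneg hfi htot hentf
      hf₁.nonneg hf₁.integrable hf₁.total hf₁.entropy_integrable
      hf₂.nonneg hf₂.integrable hf₂.total hf₂.entropy_integrable
      hmarg₁ hmarg₂
    rw [hprod]
    linarith
  have hn₁ : (0:ℝ) < (ℓ₁ : ℝ) := by exact_mod_cast hℓ₁
  have hn₂ : (0:ℝ) < (ℓ₂ : ℝ) := by exact_mod_cast hℓ₂
  have hc : (0:ℝ) < 2 * π * Real.exp 1 := by positivity
  have hlog := log_concavg hn₁ hn₂ hf₁.moment_pos hf₂.moment_pos hc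
  unfold aniso aniso2
  rw [hE]
  linarith
end

section
/- For every matrix F ∈ ℝ^{s×ℓ}, the 0-anisotropic norm equals the scaled Frobenius norm: ⦀F⦀₀ = ‖F‖_F / √ℓ. -/
open MeasureTheory Real Matrix
open Filter Topology

/-- The RMS gain `R(F,f) = sqrt((∫ |F w|² f(w) dw)/E_f)`. -/
noncomputable def RMS {s ℓ : ℕ} (F : Matrix (Fin s) (Fin ℓ) ℝ) (f : (Fin ℓ → ℝ) → ℝ) : ℝ :=
  Real.sqrt ((∫ w : Fin ℓ → ℝ, (∑ j, (F.mulVec w j)^2) * f w) / Ef ℓ f)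

/-- Frobenius norm of a matrix. -/
noncomputable def frobNorm {s ℓ : ℕ} (F : Matrix (Fin s) (Fin ℓ) ℝ) : ℝ :=
  Real.sqrt ((Fᵀ * F).trace)

/-- The `a`-anisotropic norm `⦀F⦀_a = sup{R(F,f) : A(f) ≤ a}`. -/
noncomputable def anorm {s ℓ : ℕ} (a : ℝ) (F : Matrix (Fin s) (Fin ℓ) ℝ) : ℝ :=
  sSup {x : ℝ | ∃ f : (Fin ℓ → ℝ) → ℝ, IsGoodDensity ℓ f ∧ aniso ℓ f ≤ a ∧ x = RMS F f}


section Aux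
open Finset
variable {v : ℝ}


noncomputable def gk (v : ℝ) (x : ℝ) : ℝ :=
  (Real.sqrt (2 * π * v))⁻¹ * Real.exp (-(1/(2*v)) * x ^ 2)

lemma two_pi_v_pos (hv : 0 < v) : 0 < 2 * π * v := by positivity
lemma b_pos (hv : 0 < v) : 0 < 1/(2*v) := by positivity

lemma gk_pos (hv : 0 < v) (x : ℝ) : 0 < gk v x := by
  unfold gk
  positivity

lemma integrable_gk (hv : 0 < v) : Integrable (gk v) :=
  (integrable_exp_neg_mul_sq (b_pos hv)).const_mul _

lemma sqrt_2piv_ne (hv : 0 < v) : Real.sqrt (2 * π * v) ≠ 0 :=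
  (Real.sqrt_pos.2 (two_pi_v_pos hv)).ne'

lemma integral_exp_gauss (hv : 0 < v) :
    ∫ x : ℝ, Real.exp (-(1/(2*v)) * x ^ 2) = Real.sqrt (2 * π * v) := by
  rw [integral_gaussian]
  congr 1
  field_simp

lemma integral_gk (hv : 0 < v) : ∫ x, gk v x = 1 := by
  unfold gk
  rw [integral_const_mul, integral_exp_gauss hv, inv_mul_cancel₀ (sqrt_2piv_ne hv)]

lemma integrable_sq_exp (hv : 0 < v) :
    Integrable (fun x : ℝ => x ^ 2 * Real.exp (-(1/(2*v)) * x ^ 2)) := by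
  have := integrable_rpow_mul_exp_neg_mul_sq (b_pos hv) (s := 2) (by norm_num)
  simpa [Real.rpow_two] using this

lemma tendsto_x_exp_atTop (hv : 0 < v) :
    Tendsto (fun x : ℝ => x * Real.exp (-(1/(2*v)) * x ^ 2)) atTop (𝓝 0) := by
  have h := tendsto_rpow_abs_mul_exp_neg_mul_sq_cocompact (b_pos hv) 1
  have h' : Tendsto (fun x : ℝ => |x| ^ (1:ℝ) * rexp (-(1/(2*v)) * x ^ 2)) atTop (𝓝 0) :=
    h.mono_left (by rw [cocompact_eq_atBot_atTop]; exact le_sup_right)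
  apply squeeze_zero_norm _ h'
  intro x
  rw [Real.norm_eq_abs, abs_mul, abs_of_nonneg (Real.exp_pos _).le, Real.rpow_one]

lemma tendsto_x_exp_atBot (hv : 0 < v) :
    Tendsto (fun x : ℝ => x * Real.exp (-(1/(2*v)) * x ^ 2)) atBot (𝓝 0) := by
  have h := tendsto_rpow_abs_mul_exp_neg_mul_sq_cocompact (b_pos hv) 1
  have h' : Tendsto (fun x : ℝ => |x| ^ (1:ℝ) * rexp (-(1/(2*v)) * x ^ 2)) atBot (𝓝 0) :=
    h.mono_left (by rw [cocompact_eq_atBot_atTop]; exact le_sup_left)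
  apply squeeze_zero_norm _ h'
  intro x
  rw [Real.norm_eq_abs, abs_mul, abs_of_nonneg (Real.exp_pos _).le, Real.rpow_one]

lemma integral_sq_exp (hv : 0 < v) :
    ∫ x : ℝ, x ^ 2 * Real.exp (-(1/(2*v)) * x ^ 2) = v * Real.sqrt (2 * π * v) := by
  set b := 1/(2*v) with hb
  have hbpos := b_pos hv
  have hderiv : ∀ x : ℝ, HasDerivAt (fun x : ℝ => x * Real.exp (-b * x ^ 2))
      (Real.exp (-b * x ^ 2) - 2 * b * (x ^ 2 * Real.exp (-b * x ^ 2))) x := by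
    intro x
    have h1 : HasDerivAt (fun x : ℝ => -b * x ^ 2) (-b * (2 * x)) x := by
      simpa using ((hasDerivAt_pow 2 x).const_mul (-b))
    have h2 := (h1.exp)
    have h3 := (hasDerivAt_id x).fun_mul h2
    simp only [id_eq, one_mul] at h3
    exact h3.congr_deriv (by ring)
  have hint : Integrable (fun x : ℝ =>
      Real.exp (-b * x ^ 2) - 2 * b * (x ^ 2 * Real.exp (-b * x ^ 2))) :=
    (integrable_exp_neg_mul_sq hbpos).sub ((integrable_sq_exp hv).const_mul _)
  have h0 := integral_of_hasDerivAt_of_tendsto hderiv hint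
      (tendsto_x_exp_atBot hv) (tendsto_x_exp_atTop hv)
  rw [sub_zero] at h0
  have h1 : (∫ x : ℝ, Real.exp (-b * x ^ 2)) -
      2 * b * ∫ x : ℝ, x ^ 2 * Real.exp (-b * x ^ 2) = 0 := by
    rw [← integral_const_mul, ← integral_sub (integrable_exp_neg_mul_sq hbpos)
      ((integrable_sq_exp hv).const_mul _)]
    exact h0
  have h2 : (∫ x : ℝ, x ^ 2 * Real.exp (-b * x ^ 2)) =
      (∫ x : ℝ, Real.exp (-b * x ^ 2)) / (2 * b) := by
    rw [eq_div_iff (by positivity : (2:ℝ) * b ≠ 0)]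
    linarith [h1]
  rw [h2, integral_exp_gauss hv]
  rw [hb]
  field_simp


lemma integrable_sq_gk (hv : 0 < v) : Integrable (fun x : ℝ => x ^ 2 * gk v x) := by
  have h := (integrable_sq_exp hv).const_mul (Real.sqrt (2 * π * v))⁻¹
  apply h.congr
  filter_upwards with x
  unfold gk
  ring

lemma integral_sq_gk (hv : 0 < v) : ∫ x : ℝ, x ^ 2 * gk v x = v := by
  have he : (fun x : ℝ => x ^ 2 * gk v x) =
      fun x => (Real.sqrt (2 * π * v))⁻¹ * (x ^ 2 * Real.exp (-(1/(2*v)) * x ^ 2)) := by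
    funext x
    unfold gk
    ring
  rw [he, integral_const_mul, integral_sq_exp hv]
  rw [← mul_assoc, mul_comm _ v, mul_assoc, inv_mul_cancel₀ (sqrt_2piv_ne hv), mul_one]

lemma integrable_x_gk (hv : 0 < v) : Integrable (fun x : ℝ => x * gk v x) := by
  have h := (integrable_mul_exp_neg_mul_sq (b_pos hv)).const_mul (Real.sqrt (2 * π * v))⁻¹
  apply h.congr
  filter_upwards with x
  unfold gk
  ring

lemma gk_even (x : ℝ) : gk v (-x) = gk v x := by
  unfold gk
  rw [neg_sq]

lemma integral_x_gk (hv : 0 < v) : ∫ x : ℝ, x * gk v x = 0 := by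
  have A : MeasurePreserving (fun x : ℝ => -x) (volume : Measure ℝ) volume :=
    Measure.measurePreserving_neg _
  have h : ∫ x : ℝ, (-x) * gk v (-x) = ∫ y : ℝ, y * gk v y :=
    A.integral_comp (Homeomorph.neg ℝ).measurableEmbedding (fun y : ℝ => y * gk v y)
  have h2 : ∫ x : ℝ, (-x) * gk v (-x) = - ∫ x : ℝ, x * gk v x := by
    rw [← integral_neg]
    apply integral_congr_ae
    filter_upwards with x
    rw [gk_even, neg_mul]
  linarith [h, h2]

noncomputable def gG (ℓ : ℕ) (v : ℝ) (w : Fin ℓ → ℝ) : ℝ := ∏ i, gk v (w i)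

variable {ℓ : ℕ}

lemma gG_pos (hv : 0 < v) (w : Fin ℓ → ℝ) : 0 < gG ℓ v w :=
  Finset.prod_pos fun i _ => gk_pos hv _

lemma integrable_gG (hv : 0 < v) : Integrable (gG ℓ v) :=
  Integrable.fintype_prod (f := fun _ : Fin ℓ => gk v) fun _ => integrable_gk hv

lemma integral_gG (hv : 0 < v) : ∫ w, gG ℓ v w = 1 := by
  unfold gG
  rw [MeasureTheory.integral_fintype_prod_volume_eq_prod (f := fun _ : Fin ℓ => gk v)]
  simp [integral_gk hv]

/-- per-coordinate factor for second moment -/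
noncomputable def chi (ℓ : ℕ) (v : ℝ) (i m : Fin ℓ) (x : ℝ) : ℝ :=
  (if m = i then x ^ 2 else 1) * gk v x

lemma chi_prod (i : Fin ℓ) (w : Fin ℓ → ℝ) :
    ∏ m, chi ℓ v i m (w m) = (w i) ^ 2 * gG ℓ v w := by
  unfold chi gG
  rw [Finset.prod_mul_distrib]
  congr 1
  simp [Finset.prod_ite_eq']

lemma integrable_chi (hv : 0 < v) (i m : Fin ℓ) : Integrable (chi ℓ v i m) := by
  unfold chi
  by_cases h : m = i <;> simp only [h, if_pos, if_true, if_neg, if_false, one_mul]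
  · exact integrable_sq_gk hv
  · simpa using integrable_gk hv

lemma integrable_sq_coord_gG (hv : 0 < v) (i : Fin ℓ) :
    Integrable (fun w : Fin ℓ → ℝ => (w i) ^ 2 * gG ℓ v w) := by
  have := Integrable.fintype_prod (f := chi ℓ v i) fun m => integrable_chi hv i m
  apply this.congr
  filter_upwards with w using chi_prod i w

lemma integral_sq_coord_gG (hv : 0 < v) (i : Fin ℓ) :
    ∫ w : Fin ℓ → ℝ, (w i) ^ 2 * gG ℓ v w = v := by
  rw [← integral_congr_ae (Filter.Eventually.of_forall (chi_prod (v := v) i)),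
    MeasureTheory.integral_fintype_prod_volume_eq_prod (f := chi ℓ v i)]
  have : ∀ m : Fin ℓ, (∫ x, chi ℓ v i m x) = if m = i then v else 1 := by
    intro m
    unfold chi
    by_cases h : m = i <;> simp only [h, if_true, if_false, one_mul]
    · exact integral_sq_gk hv
    · exact integral_gk hv
  rw [Finset.prod_congr rfl fun m _ => this m]
  simp

/-- per-coordinate factor for cross moment -/
noncomputable def psi (ℓ : ℕ) (v : ℝ) (i i' m : Fin ℓ) (x : ℝ) : ℝ :=
  (if m = i then x else 1) * ((if m = i' then x else 1) * gk v x)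

lemma psi_prod (i i' : Fin ℓ) (w : Fin ℓ → ℝ) :
    ∏ m, psi ℓ v i i' m (w m) = w i * w i' * gG ℓ v w := by
  unfold psi gG
  rw [Finset.prod_mul_distrib, Finset.prod_mul_distrib]
  simp [Finset.prod_ite_eq', mul_assoc]

lemma integrable_psi (hv : 0 < v) (i i' m : Fin ℓ) : Integrable (psi ℓ v i i' m) := by
  unfold psi
  by_cases h : m = i
  · subst h
    by_cases h' : m = i'
    · subst h'
      simp only [if_pos rfl]
      exact (integrable_sq_gk hv).congr (by filter_upwards with x using by simp [pow_two, mul_assoc])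
    · simp only [if_pos rfl, if_neg h', one_mul]
      exact integrable_x_gk hv
  · by_cases h' : m = i'
    · subst h'
      simp only [if_neg h, if_pos rfl, one_mul]
      exact integrable_x_gk hv
    · simp only [if_neg h, if_neg h', one_mul]
      exact integrable_gk hv

lemma integrable_cross_gG (hv : 0 < v) (i i' : Fin ℓ) :
    Integrable (fun w : Fin ℓ → ℝ => w i * w i' * gG ℓ v w) := by
  have := Integrable.fintype_prod (f := psi ℓ v i i') fun m => integrable_psi hv i i' m
  apply this.congr
  filter_upwards with w using psi_prod i i' w

lemma integral_cross_gG (hv : 0 < v) {i i' : Fin ℓ} (h : i ≠ i') :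
    ∫ w : Fin ℓ → ℝ, w i * w i' * gG ℓ v w = 0 := by
  rw [← integral_congr_ae (Filter.Eventually.of_forall (psi_prod (v := v) i i')),
    MeasureTheory.integral_fintype_prod_volume_eq_prod (f := psi ℓ v i i')]
  apply Finset.prod_eq_zero (Finset.mem_univ i)
  unfold psi
  simp only [if_pos rfl, if_neg h, one_mul]
  exact integral_x_gk hv

variable {ℓ : ℕ}

lemma log_gk (hv : 0 < v) (x : ℝ) :
    Real.log (gk v x) = -(1/2) * Real.log (2*π*v) - (1/(2*v)) * x ^ 2 := by
  unfold gk
  rw [Real.log_mul (inv_ne_zero (sqrt_2piv_ne hv)) (Real.exp_ne_zero _),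
    Real.log_inv, Real.log_sqrt (two_pi_v_pos hv).le, Real.log_exp]
  ring

lemma log_gG (hv : 0 < v) (w : Fin ℓ → ℝ) :
    Real.log (gG ℓ v w) = -((ℓ:ℝ)/2) * Real.log (2*π*v) - (1/(2*v)) * ∑ i, (w i)^2 := by
  unfold gG
  rw [Real.log_prod (fun i _ => (gk_pos hv _).ne')]
  simp_rw [log_gk hv]
  rw [Finset.sum_sub_distrib, Finset.sum_const, Finset.card_univ, Fintype.card_fin,
    ← Finset.mul_sum]
  push_cast
  ring

lemma integrable_moment_gG (hv : 0 < v) :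
    Integrable (fun w : Fin ℓ → ℝ => (∑ i, (w i)^2) * gG ℓ v w) := by
  simp_rw [Finset.sum_mul]
  exact integrable_finset_sum _ (fun i _ => integrable_sq_coord_gG hv i)

lemma integral_moment_gG (hv : 0 < v) :
    ∫ w : Fin ℓ → ℝ, (∑ i, (w i)^2) * gG ℓ v w = ℓ * v := by
  simp_rw [Finset.sum_mul]
  rw [integral_finset_sum _ (fun i _ => integrable_sq_coord_gG hv i)]
  rw [Finset.sum_congr rfl fun i _ => integral_sq_coord_gG hv i]
  simp [mul_comm]

lemma Ef_gG (hv : 0 < v) : Ef ℓ (gG ℓ v) = ℓ * v := integral_moment_gG hv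

lemma integrable_mul_log_gG (hv : 0 < v) {f : (Fin ℓ → ℝ) → ℝ} (h1 : Integrable f)
    (h2 : Integrable (fun w : Fin ℓ → ℝ => (∑ i, (w i)^2) * f w)) :
    Integrable (fun w : Fin ℓ → ℝ => f w * Real.log (gG ℓ v w)) := by
  have he : (fun w : Fin ℓ → ℝ => f w * Real.log (gG ℓ v w)) =
      fun w => (-((ℓ:ℝ)/2) * Real.log (2*π*v)) * f w
        - (1/(2*v)) * ((∑ i, (w i)^2) * f w) := by
    funext w
    rw [log_gG hv]
    ring
  rw [he]
  exact (h1.const_mul _).sub (h2.const_mul _)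

lemma integral_mul_log_gG (hv : 0 < v) {f : (Fin ℓ → ℝ) → ℝ} (h1 : Integrable f)
    (h2 : Integrable (fun w : Fin ℓ → ℝ => (∑ i, (w i)^2) * f w))
    (htot : (∫ w, f w) = 1) :
    ∫ w : Fin ℓ → ℝ, f w * Real.log (gG ℓ v w)
      = -((ℓ:ℝ)/2) * Real.log (2*π*v) - (1/(2*v)) * Ef ℓ f := by
  have he : (fun w : Fin ℓ → ℝ => f w * Real.log (gG ℓ v w)) =
      fun w => (-((ℓ:ℝ)/2) * Real.log (2*π*v)) * f w
        - (1/(2*v)) * ((∑ i, (w i)^2) * f w) := by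
    funext w
    rw [log_gG hv]
    ring
  rw [he, integral_sub (h1.const_mul _) (h2.const_mul _), integral_const_mul,
    integral_const_mul, htot]
  unfold Ef
  ring

lemma gibbs_nonneg {t y : ℝ} (ht : 0 ≤ t) (hy : 0 < y) :
    0 ≤ t * Real.log t - t * Real.log y - t + y := by
  rcases ht.eq_or_lt with rfl | htp
  · simp
    linarith
  · have h := Real.log_le_sub_one_of_pos (show 0 < y/t by positivity)
    have hlog : Real.log (y/t) = Real.log y - Real.log t := Real.log_div hy.ne' htp.ne'
    rw [hlog] at h
    have h2 : t * (Real.log y - Real.log t) ≤ t * (y/t - 1) :=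
      mul_le_mul_of_nonneg_left h htp.le
    have h3 : t * (y/t - 1) = y - t := by field_simp
    nlinarith

lemma gibbs_eq {t y : ℝ} (ht : 0 ≤ t) (hy : 0 < y)
    (h0 : t * Real.log t - t * Real.log y - t + y = 0) : t = y := by
  rcases ht.eq_or_lt with rfl | htp
  · simp at h0
    linarith
  · by_contra hne
    have hyt : y/t ≠ 1 := by
      intro h1
      apply hne
      field_simp at h1
      linarith
    have h := Real.log_lt_sub_one_of_pos (show 0 < y/t by positivity) hyt
    have hlog : Real.log (y/t) = Real.log y - Real.log t := Real.log_div hy.ne' htp.ne'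
    rw [hlog] at h
    have h2 : t * (Real.log y - Real.log t) < t * (y/t - 1) :=
      (mul_lt_mul_iff_right₀ htp).mpr h
    have h3 : t * (y/t - 1) = y - t := by field_simp
    nlinarith

lemma key_ae {f : (Fin ℓ → ℝ) → ℝ} (hl : 1 ≤ ℓ) (hf : IsGoodDensity ℓ f)
    (ha : aniso ℓ f ≤ 0) : f =ᵐ[volume] gG ℓ (Ef ℓ f / ℓ) := by
  have hlpos : (0:ℝ) < (ℓ:ℝ) := by exact_mod_cast hl
  set v := Ef ℓ f / ℓ with hvdef
  have hv : 0 < v := div_pos hf.moment_pos hlpos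
  have hEf : Ef ℓ f = ℓ * v := by
    rw [hvdef]
    field_simp
  set g := gG ℓ v with hgdef
  have hD0 : ∀ w, 0 ≤ f w * Real.log (f w) - f w * Real.log (g w) - f w + g w :=
    fun w => gibbs_nonneg (hf.nonneg w) (gG_pos hv w)
  have hglog : Integrable (fun w : Fin ℓ → ℝ => f w * Real.log (g w)) :=
    integrable_mul_log_gG hv hf.integrable hf.moment_integrable
  have hI2 : Integrable (fun w : Fin ℓ → ℝ => f w * Real.log (f w) - f w * Real.log (g w)) :=
    hf.entropy_integrable.sub hglog
  have hI1 : Integrable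
      (fun w : Fin ℓ → ℝ => f w * Real.log (f w) - f w * Real.log (g w) - f w) :=
    hI2.sub hf.integrable
  have hDint : Integrable
      (fun w : Fin ℓ → ℝ => f w * Real.log (f w) - f w * Real.log (g w) - f w + g w) :=
    hI1.add (integrable_gG hv)
  have hAD : ∫ w : Fin ℓ → ℝ, (f w * Real.log (f w) - f w * Real.log (g w) - f w + g w)
      = aniso ℓ f := by
    rw [integral_add hI1 (integrable_gG hv),
      integral_sub hI2 hf.integrable,
      integral_sub hf.entropy_integrable hglog, hf.total, integral_gG hv,
      integral_mul_log_gG hv hf.integrable hf.moment_integrable hf.total]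
    unfold aniso dEnt
    have hc : 2 * π * Real.exp 1 * Ef ℓ f / ℓ = (2*π*v) * Real.exp 1 := by
      rw [hEf]
      field_simp
    rw [hc, Real.log_mul (by positivity) (Real.exp_pos 1).ne', Real.log_exp, hEf]
    field_simp
    ring
  have hDzero : ∫ w : Fin ℓ → ℝ, (f w * Real.log (f w) - f w * Real.log (g w) - f w + g w)
      = 0 := le_antisymm (hAD ▸ ha) (integral_nonneg hD0)
  have hae := (integral_eq_zero_iff_of_nonneg hD0 hDint).mp hDzero
  filter_upwards [hae] with w hw
  exact gibbs_eq (hf.nonneg w) (gG_pos hv w) hw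

lemma integral_cross_gG' (hv : 0 < v) (i i' : Fin ℓ) :
    ∫ w : Fin ℓ → ℝ, w i * w i' * gG ℓ v w = if i = i' then v else 0 := by
  by_cases h : i = i'
  · subst h
    rw [if_pos rfl]
    have he : ∫ w : Fin ℓ → ℝ, w i * w i * gG ℓ v w
        = ∫ w : Fin ℓ → ℝ, (w i)^2 * gG ℓ v w :=
      integral_congr_ae (Filter.Eventually.of_forall fun w => by ring)
    rw [he]
    exact integral_sq_coord_gG hv i
  · rw [if_neg h]
    exact integral_cross_gG hv h

lemma integral_Fquad_gG {s : ℕ} (hv : 0 < v) (F : Matrix (Fin s) (Fin ℓ) ℝ) :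
    ∫ w : Fin ℓ → ℝ, (∑ j, (F.mulVec w j)^2) * gG ℓ v w
      = v * ∑ j, ∑ i, F j i * F j i := by
  have hexp : ∀ w : Fin ℓ → ℝ, (∑ j, (F.mulVec w j)^2) * gG ℓ v w
      = ∑ j, ∑ i, ∑ i', (F j i * F j i') * (w i * w i' * gG ℓ v w) := by
    intro w
    rw [Finset.sum_mul]
    refine Finset.sum_congr rfl fun j _ => ?_
    rw [Matrix.mulVec, show (F j ⬝ᵥ w) = ∑ i, F j i * w i from rfl, pow_two,
      Finset.sum_mul_sum, Finset.sum_mul]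
    refine Finset.sum_congr rfl fun i _ => ?_
    rw [Finset.sum_mul]
    refine Finset.sum_congr rfl fun i' _ => ?_
    ring
  rw [integral_congr_ae (Filter.Eventually.of_forall hexp)]
  rw [integral_finset_sum _ (fun j _ => integrable_finset_sum _ (fun i _ =>
    integrable_finset_sum _ (fun i' _ => (integrable_cross_gG hv i i').const_mul _)))]
  have : ∀ j, (∫ w : Fin ℓ → ℝ, ∑ i, ∑ i', (F j i * F j i') * (w i * w i' * gG ℓ v w))
      = ∑ i, F j i * F j i * v := by
    intro j
    rw [integral_finset_sum _ (fun i _ =>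
      integrable_finset_sum _ (fun i' _ => (integrable_cross_gG hv i i').const_mul _))]
    refine Finset.sum_congr rfl fun i _ => ?_
    rw [integral_finset_sum _ (fun i' _ => (integrable_cross_gG hv i i').const_mul _)]
    have : ∀ i', (∫ w : Fin ℓ → ℝ, (F j i * F j i') * (w i * w i' * gG ℓ v w))
        = if i = i' then F j i * F j i * v else 0 := by
      intro i'
      rw [integral_const_mul, integral_cross_gG' hv]
      by_cases h : i = i'
      · subst h
        simp
      · simp [h]
    rw [Finset.sum_congr rfl fun i' _ => this i']
    simp
  rw [Finset.sum_congr rfl fun j _ => this j, Finset.mul_sum]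
  refine Finset.sum_congr rfl fun j _ => ?_
  rw [Finset.mul_sum]
  refine Finset.sum_congr rfl fun i _ => ?_
  ring

lemma trace_eq {s : ℕ} (F : Matrix (Fin s) (Fin ℓ) ℝ) :
    (Fᵀ * F).trace = ∑ j, ∑ i, F j i * F j i := by
  rw [Matrix.trace]
  simp only [Matrix.diag_apply, Matrix.mul_apply, Matrix.transpose_apply]
  rw [Finset.sum_comm]

lemma rms_eq {s : ℕ} {f : (Fin ℓ → ℝ) → ℝ} (hl : 1 ≤ ℓ) (hf : IsGoodDensity ℓ f)
    (ha : aniso ℓ f ≤ 0) (F : Matrix (Fin s) (Fin ℓ) ℝ) :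
    RMS F f = frobNorm F / Real.sqrt ℓ := by
  have hlpos : (0:ℝ) < (ℓ:ℝ) := by exact_mod_cast hl
  set v := Ef ℓ f / ℓ with hvdef
  have hv : 0 < v := div_pos hf.moment_pos hlpos
  have hEf : Ef ℓ f = ℓ * v := by
    rw [hvdef]
    field_simp
  have hae := key_ae hl hf ha
  set T := ∑ j, ∑ i, F j i * F j i with hT
  have hTnn : 0 ≤ T :=
    Finset.sum_nonneg fun j _ => Finset.sum_nonneg fun i _ => mul_self_nonneg _
  have hnum : ∫ w : Fin ℓ → ℝ, (∑ j, (F.mulVec w j)^2) * f w = v * T := by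
    rw [integral_congr_ae (by filter_upwards [hae] with w hw; rw [hw] :
      (fun w : Fin ℓ → ℝ => (∑ j, (F.mulVec w j)^2) * f w)
        =ᵐ[volume] fun w => (∑ j, (F.mulVec w j)^2) * gG ℓ v w)]
    exact integral_Fquad_gG hv F
  unfold RMS frobNorm
  rw [hnum, hEf, trace_eq]
  rw [show v * T / ((ℓ:ℝ) * v) = T / ℓ by field_simp]
  rw [Real.sqrt_div hTnn]

lemma good_gG (hl : 1 ≤ ℓ) : IsGoodDensity ℓ (gG ℓ 1) := by
  have hlpos : (0:ℝ) < (ℓ:ℝ) := by exact_mod_cast hl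
  refine ⟨fun w => (gG_pos one_pos w).le, integrable_gG one_pos, integral_gG one_pos,
    integrable_moment_gG one_pos, ?_, ?_⟩
  · rw [Ef_gG one_pos]
    simpa using hlpos
  · exact integrable_mul_log_gG one_pos (integrable_gG one_pos) (integrable_moment_gG one_pos)

lemma aniso_gG (hl : 1 ≤ ℓ) : aniso ℓ (gG ℓ 1) = 0 := by
  have hlpos : (0:ℝ) < (ℓ:ℝ) := by exact_mod_cast hl
  unfold aniso dEnt
  rw [integral_mul_log_gG one_pos (integrable_gG one_pos) (integrable_moment_gG one_pos)
    (integral_gG one_pos), Ef_gG one_pos]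
  have hc : 2 * π * Real.exp 1 * ((ℓ:ℝ) * 1) / ℓ = (2*π*1) * Real.exp 1 := by
    field_simp
  rw [hc, Real.log_mul (by positivity) (Real.exp_pos 1).ne', Real.log_exp]
  ring

end Aux

/-- The `0`-anisotropic norm equals the scaled Frobenius norm `‖F‖_F/√ℓ`. -/
theorem anorm_zero (s ℓ : ℕ) (hℓ : 1 ≤ ℓ) (F : Matrix (Fin s) (Fin ℓ) ℝ) :
    anorm 0 F = frobNorm F / Real.sqrt ℓ := by
  have hset : {x : ℝ | ∃ f : (Fin ℓ → ℝ) → ℝ, IsGoodDensity ℓ f ∧ aniso ℓ f ≤ 0 ∧ x = RMS F f}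
      = {frobNorm F / Real.sqrt ℓ} := by
    ext x
    simp only [Set.mem_setOf_eq, Set.mem_singleton_iff]
    constructor
    · rintro ⟨f, hf, ha, rfl⟩
      exact rms_eq hℓ hf ha F
    · rintro rfl
      exact ⟨gG ℓ 1, good_gG hℓ, le_of_eq (aniso_gG hℓ),
        (rms_eq hℓ (good_gG hℓ) (le_of_eq (aniso_gG hℓ)) F).symm⟩
  unfold anorm
  rw [hset, csSup_singleton]
end

section
/- For every matrix F ∈ ℝ^{s×ℓ}, the function a ↦ ⦀F⦀_a is nondecreasing on [0,∞), satisfies ⦀F⦀_a ≤ σ_max(F) for all a ≥ 0, and converges to the largest singular value: lim_{a→+∞} ⦀F⦀_a = σ_max(F). -/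
open MeasureTheory Real Matrix

/-- The largest singular value of `F`: the supremum of `‖F w‖` over unit vectors `w`. -/
noncomputable def sigmaMax {s ℓ : ℕ} (F : Matrix (Fin s) (Fin ℓ) ℝ) : ℝ :=
  sSup {x : ℝ | ∃ w : Fin ℓ → ℝ, (∑ i, (w i)^2) = 1 ∧ x = Real.sqrt (∑ j, (F.mulVec w j)^2)}


namespace AnormAux

/-! ### Euclidean norm helpers -/

lemma normE {n : ℕ} (v : Fin n → ℝ) :
    ‖(WithLp.toLp 2 v : EuclideanSpace ℝ (Fin n))‖ = Real.sqrt (∑ i, (v i)^2) := by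
  rw [EuclideanSpace.norm_eq]
  congr 1
  exact Finset.sum_congr rfl fun i _ => by simp [Real.norm_eq_abs, sq_abs]

lemma sqrt_add_le {n : ℕ} (u v : Fin n → ℝ) :
    Real.sqrt (∑ i, (u i + v i)^2) ≤ Real.sqrt (∑ i, (u i)^2) + Real.sqrt (∑ i, (v i)^2) := by
  have := norm_add_le (WithLp.toLp 2 u : EuclideanSpace ℝ (Fin n)) (WithLp.toLp 2 v)
  rwa [← WithLp.toLp_add, normE, normE, normE] at this

lemma sum_sq_nonneg {n : ℕ} (v : Fin n → ℝ) : 0 ≤ ∑ i, (v i)^2 :=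
  Finset.sum_nonneg fun _ _ => sq_nonneg _

/-- Reverse triangle inequality in the form we use. -/
lemma rev_tri {n : ℕ} (u v : Fin n → ℝ) :
    Real.sqrt (∑ i, (u i)^2) - Real.sqrt (∑ i, (u i - v i)^2) ≤ Real.sqrt (∑ i, (v i)^2) := by
  have h1 : Real.sqrt (∑ i, (u i)^2) ≤
      Real.sqrt (∑ i, (v i)^2) + Real.sqrt (∑ i, (u i - v i)^2) := by
    have := sqrt_add_le (fun i => v i) (fun i => u i - v i)
    have he : ∑ i, (v i + (u i - v i))^2 = ∑ i, (u i)^2 :=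
      Finset.sum_congr rfl fun i _ => by ring_nf
    rwa [he] at this
  linarith

variable {s ℓ : ℕ}

/-- Cauchy–Schwarz bound for a matrix acting on a vector. -/
lemma cs_bound (F : Matrix (Fin s) (Fin ℓ) ℝ) (v : Fin ℓ → ℝ) :
    ∑ j, (F.mulVec v j)^2 ≤ (∑ j, ∑ i, (F j i)^2) * ∑ i, (v i)^2 := by
  rw [Finset.sum_mul]
  apply Finset.sum_le_sum
  intro j _
  have h := Finset.sum_mul_sq_le_sq_mul_sq Finset.univ (fun i => F j i) v
  have he : F.mulVec v j = ∑ i, F j i * v i := rfl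
  rw [he]
  exact h

lemma sqrt_op_bound (F : Matrix (Fin s) (Fin ℓ) ℝ) (v : Fin ℓ → ℝ) :
    Real.sqrt (∑ j, (F.mulVec v j)^2) ≤
      Real.sqrt (∑ j, ∑ i, (F j i)^2) * Real.sqrt (∑ i, (v i)^2) := by
  rw [← Real.sqrt_mul (Finset.sum_nonneg fun j _ => sum_sq_nonneg (F j))]
  exact Real.sqrt_le_sqrt (cs_bound F v)

/-! ### Facts about the singular value set -/

lemma sigma_set_nonempty (hℓ : 1 ≤ ℓ) (F : Matrix (Fin s) (Fin ℓ) ℝ) :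
    {x : ℝ | ∃ w : Fin ℓ → ℝ, (∑ i, (w i)^2) = 1 ∧
      x = Real.sqrt (∑ j, (F.mulVec w j)^2)}.Nonempty := by
  refine ⟨_, Pi.single ⟨0, hℓ⟩ 1, ?_, rfl⟩
  rw [Finset.sum_eq_single (⟨0, hℓ⟩ : Fin ℓ)]
  · simp
  · intro b _ hb; simp [Pi.single_apply, hb]
  · intro h; exact absurd (Finset.mem_univ _) h

lemma sigma_set_bdd (F : Matrix (Fin s) (Fin ℓ) ℝ) :
    BddAbove {x : ℝ | ∃ w : Fin ℓ → ℝ, (∑ i, (w i)^2) = 1 ∧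
      x = Real.sqrt (∑ j, (F.mulVec w j)^2)} := by
  refine ⟨Real.sqrt (∑ j, ∑ i, (F j i)^2), ?_⟩
  rintro x ⟨w, hw, rfl⟩
  have := sqrt_op_bound F w
  rwa [hw, Real.sqrt_one, mul_one] at this

lemma sigmaMax_nonneg (F : Matrix (Fin s) (Fin ℓ) ℝ) : 0 ≤ sigmaMax F :=
  Real.sSup_nonneg (by rintro x ⟨w, hw, rfl⟩; exact Real.sqrt_nonneg _)

/-- Pointwise operator-norm bound. -/
lemma op_bound (F : Matrix (Fin s) (Fin ℓ) ℝ) (w : Fin ℓ → ℝ) :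
    ∑ j, (F.mulVec w j)^2 ≤ (sigmaMax F)^2 * ∑ i, (w i)^2 := by
  by_cases h0 : ∑ i, (w i)^2 = 0
  · have hw : w = 0 := by
      funext i
      have := (Finset.sum_eq_zero_iff_of_nonneg (fun i _ => sq_nonneg (w i))).1 h0 i
        (Finset.mem_univ i)
      exact (pow_eq_zero_iff two_ne_zero).1 this
    subst hw
    simp [Matrix.mulVec_zero]
  · have hpos : 0 < ∑ i, (w i)^2 := lt_of_le_of_ne (sum_sq_nonneg w) (Ne.symm h0)
    set r := Real.sqrt (∑ i, (w i)^2) with hr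
    have hrpos : 0 < r := Real.sqrt_pos.2 hpos
    set u := r⁻¹ • w with hu
    have hu1 : ∑ i, (u i)^2 = 1 := by
      simp only [hu, Pi.smul_apply, smul_eq_mul, mul_pow, ← Finset.mul_sum]
      rw [← Real.sqrt_inv]
      rw [Real.sq_sqrt (inv_nonneg.2 hpos.le)]
      exact inv_mul_cancel₀ h0
    have hmem : Real.sqrt (∑ j, (F.mulVec u j)^2) ∈
        {x : ℝ | ∃ w : Fin ℓ → ℝ, (∑ i, (w i)^2) = 1 ∧
          x = Real.sqrt (∑ j, (F.mulVec w j)^2)} := ⟨u, hu1, rfl⟩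
    have h1 : Real.sqrt (∑ j, (F.mulVec u j)^2) ≤ sigmaMax F :=
      le_csSup (sigma_set_bdd F) hmem
    have h2 : ∑ j, (F.mulVec u j)^2 ≤ (sigmaMax F)^2 := by
      have := pow_le_pow_left₀ (Real.sqrt_nonneg _) h1 2
      rwa [Real.sq_sqrt (sum_sq_nonneg _)] at this
    have hw : w = r • u := (smul_inv_smul₀ hrpos.ne' w).symm
    calc ∑ j, (F.mulVec w j)^2 = ∑ j, (r * F.mulVec u j)^2 := by
          rw [hw, Matrix.mulVec_smul]
          exact Finset.sum_congr rfl fun j _ => by simp [smul_eq_mul]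
      _ = r^2 * ∑ j, (F.mulVec u j)^2 := by
          rw [Finset.mul_sum]; exact Finset.sum_congr rfl fun j _ => by ring
      _ ≤ r^2 * (sigmaMax F)^2 := by
          exact mul_le_mul_of_nonneg_left h2 (sq_nonneg r)
      _ = (sigmaMax F)^2 * ∑ i, (w i)^2 := by
          rw [hr, Real.sq_sqrt hpos.le]; ring

/-! ### Continuity -/

lemma cont_g1 : Continuous fun w : Fin ℓ → ℝ => ∑ i, (w i)^2 :=
  continuous_finset_sum _ fun i _ => (continuous_apply i).pow 2

lemma cont_g2 (F : Matrix (Fin s) (Fin ℓ) ℝ) :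
    Continuous fun w : Fin ℓ → ℝ => ∑ j, (F.mulVec w j)^2 := by
  apply continuous_finset_sum
  intro j _
  have h : (fun w : Fin ℓ → ℝ => F.mulVec w j) = fun w => ∑ i, F j i * w i := rfl
  exact ((h ▸ (continuous_finset_sum (Finset.univ)
    fun i _ => continuous_const.mul (continuous_apply i)) :
      Continuous fun w : Fin ℓ → ℝ => F.mulVec w j)).pow 2

/-! ### The uniform box density -/

variable {s : ℕ}

/-- Box of side 2 centered at `c`. -/
def box (ℓ : ℕ) (c : Fin ℓ → ℝ) : Set (Fin ℓ → ℝ) :=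
  Set.univ.pi fun i => Set.Icc (c i - 1) (c i + 1)

/-- Uniform density on the box. -/
noncomputable def bf (ℓ : ℕ) (c : Fin ℓ → ℝ) : (Fin ℓ → ℝ) → ℝ :=
  (box ℓ c).indicator fun _ => ((2:ℝ)^ℓ)⁻¹

variable {ℓ : ℕ} {c : Fin ℓ → ℝ}

lemma box_meas : MeasurableSet (box ℓ c) :=
  MeasurableSet.univ_pi fun _ => measurableSet_Icc

lemma box_compact : IsCompact (box ℓ c) :=
  isCompact_univ_pi fun _ => isCompact_Icc

lemma box_vol : volume (box ℓ c) = 2^ℓ := by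
  rw [box, volume_pi_pi]
  have h : ∀ i, volume (Set.Icc (c i - 1) (c i + 1)) = 2 := fun i => by
    rw [Real.volume_Icc, show c i + 1 - (c i - 1) = 2 by ring]
    norm_num
  simp [h]

lemma box_vol_lt_top : volume (box ℓ c) < ⊤ := by
  rw [box_vol]; exact ENNReal.pow_lt_top (by norm_num : (2 : ENNReal) < ⊤)

lemma bf_nonneg (w : Fin ℓ → ℝ) : 0 ≤ bf ℓ c w :=
  Set.indicator_nonneg (fun _ _ => by positivity) w

lemma bf_mul_eq (g : (Fin ℓ → ℝ) → ℝ) :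
    (fun w => g w * bf ℓ c w) = (box ℓ c).indicator fun w => g w * ((2:ℝ)^ℓ)⁻¹ := by
  funext w
  by_cases h : w ∈ box ℓ c <;> simp [bf, h]

lemma bf_integrable : Integrable (bf ℓ c) := by
  rw [bf, integrable_indicator_iff box_meas]
  exact integrableOn_const box_vol_lt_top.ne

lemma integral_bf : ∫ w, bf ℓ c w = 1 := by
  rw [bf, integral_indicator_const _ box_meas, measureReal_def, box_vol]
  simp [ENNReal.toReal_pow]

lemma integrable_mul_bf {g : (Fin ℓ → ℝ) → ℝ} (hg : Continuous g) :
    Integrable fun w => g w * bf ℓ c w := by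
  rw [bf_mul_eq, integrable_indicator_iff box_meas]
  exact ContinuousOn.integrableOn_compact box_compact
    ((hg.mul continuous_const).continuousOn)

lemma entropy_integrable_bf : Integrable fun w => bf ℓ c w * Real.log (bf ℓ c w) := by
  have h : (fun w => bf ℓ c w * Real.log (bf ℓ c w)) =
      (box ℓ c).indicator fun _ => ((2:ℝ)^ℓ)⁻¹ * Real.log (((2:ℝ)^ℓ)⁻¹) := by
    funext w
    by_cases h : w ∈ box ℓ c <;> simp [bf, h]
  rw [h, integrable_indicator_iff box_meas]
  exact integrableOn_const box_vol_lt_top.ne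

lemma integral_mul_bf_ge {g : (Fin ℓ → ℝ) → ℝ} (hg : Continuous g) {m : ℝ}
    (hm : ∀ w ∈ box ℓ c, m ≤ g w) : m ≤ ∫ w, g w * bf ℓ c w := by
  have h1 : ∀ w, m * bf ℓ c w ≤ g w * bf ℓ c w := by
    intro w
    by_cases h : w ∈ box ℓ c
    · exact mul_le_mul_of_nonneg_right (hm w h) (bf_nonneg w)
    · simp [bf, Set.indicator_of_notMem h]
  calc m = ∫ w, m * bf ℓ c w := by rw [integral_const_mul, integral_bf, mul_one]
    _ ≤ ∫ w, g w * bf ℓ c w :=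
        integral_mono (bf_integrable.const_mul m) (integrable_mul_bf hg) h1

lemma integral_mul_bf_le {g : (Fin ℓ → ℝ) → ℝ} (hg : Continuous g) {M : ℝ}
    (hM : ∀ w ∈ box ℓ c, g w ≤ M) : ∫ w, g w * bf ℓ c w ≤ M := by
  have h1 : ∀ w, g w * bf ℓ c w ≤ M * bf ℓ c w := by
    intro w
    by_cases h : w ∈ box ℓ c
    · exact mul_le_mul_of_nonneg_right (hM w h) (bf_nonneg w)
    · simp [bf, Set.indicator_of_notMem h]
  calc ∫ w, g w * bf ℓ c w ≤ ∫ w, M * bf ℓ c w :=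
        integral_mono (integrable_mul_bf hg) (bf_integrable.const_mul M) h1
    _ = M := by rw [integral_const_mul, integral_bf, mul_one]

/-- On the box, the displacement from the center has Euclidean norm at most `√ℓ`. -/
lemma box_dist {w : Fin ℓ → ℝ} (hw : w ∈ box ℓ c) :
    Real.sqrt (∑ i, (w i - c i)^2) ≤ Real.sqrt ℓ := by
  apply Real.sqrt_le_sqrt
  calc ∑ i, (w i - c i)^2 ≤ ∑ _i : Fin ℓ, (1:ℝ) := by
        apply Finset.sum_le_sum
        intro i _
        have h := hw i (Set.mem_univ i)
        rcases h with ⟨h1, h2⟩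
        exact (sq_le_one_iff_abs_le_one _).2 (abs_le.2 ⟨by linarith, by linarith⟩)
    _ = ℓ := by simp

/-- On the box, lower bound for the norm of `w`. -/
lemma box_norm_ge {w : Fin ℓ → ℝ} (hw : w ∈ box ℓ c) :
    Real.sqrt (∑ i, (c i)^2) - Real.sqrt ℓ ≤ Real.sqrt (∑ i, (w i)^2) := by
  have h1 := rev_tri c w
  have h2 : ∑ i, (c i - w i)^2 = ∑ i, (w i - c i)^2 :=
    Finset.sum_congr rfl fun i _ => by ring
  rw [h2] at h1
  have h3 := box_dist hw
  linarith

/-- On the box, upper bound for the norm of `w`. -/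
lemma box_norm_le {w : Fin ℓ → ℝ} (hw : w ∈ box ℓ c) :
    Real.sqrt (∑ i, (w i)^2) ≤ Real.sqrt (∑ i, (c i)^2) + Real.sqrt ℓ := by
  have h1 := rev_tri w c
  have h3 := box_dist hw
  linarith

/-- On the box, lower bound for the norm of `F w`. -/
lemma box_Fnorm_ge (F : Matrix (Fin s) (Fin ℓ) ℝ) {w : Fin ℓ → ℝ} (hw : w ∈ box ℓ c) :
    Real.sqrt (∑ j, (F.mulVec c j)^2)
      - Real.sqrt (∑ j, ∑ i, (F j i)^2) * Real.sqrt ℓ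
      ≤ Real.sqrt (∑ j, (F.mulVec w j)^2) := by
  have hdec : F.mulVec c = F.mulVec w + F.mulVec (c - w) := by
    rw [← Matrix.mulVec_add]
    congr 1
    funext i
    simp
  have h1 : Real.sqrt (∑ j, (F.mulVec c j)^2) ≤
      Real.sqrt (∑ j, (F.mulVec w j)^2) + Real.sqrt (∑ j, (F.mulVec (c - w) j)^2) := by
    have := sqrt_add_le (F.mulVec w) (F.mulVec (c - w))
    have he : ∑ j, (F.mulVec w j + F.mulVec (c - w) j)^2 = ∑ j, (F.mulVec c j)^2 := by
      apply Finset.sum_congr rfl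
      intro j _
      rw [hdec]
      simp
    rwa [he] at this
  have h2 : Real.sqrt (∑ j, (F.mulVec (c - w) j)^2) ≤
      Real.sqrt (∑ j, ∑ i, (F j i)^2) * Real.sqrt ℓ := by
    have ha := sqrt_op_bound F (c - w)
    have hb : Real.sqrt (∑ i, ((c - w) i)^2) ≤ Real.sqrt ℓ := by
      have he : ∑ i, ((c - w) i)^2 = ∑ i, (w i - c i)^2 :=
        Finset.sum_congr rfl fun i _ => by simp [Pi.sub_apply]; ring
      rw [he]
      exact box_dist hw
    calc Real.sqrt (∑ j, (F.mulVec (c - w) j)^2)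
        ≤ Real.sqrt (∑ j, ∑ i, (F j i)^2) * Real.sqrt (∑ i, ((c - w) i)^2) := ha
      _ ≤ Real.sqrt (∑ j, ∑ i, (F j i)^2) * Real.sqrt ℓ :=
          mul_le_mul_of_nonneg_left hb (Real.sqrt_nonneg _)
  linarith


end AnormAux
namespace AnormAux

variable {s ℓ : ℕ}

lemma smul_norm_eq {w₀ : Fin ℓ → ℝ} (hw₀ : (∑ i, (w₀ i)^2) = 1) {R : ℝ} (hR0 : 0 ≤ R) :
    Real.sqrt (∑ i, ((R • w₀) i)^2) = R := by
  have h : ∑ i, ((R • w₀) i)^2 = R^2 * ∑ i, (w₀ i)^2 := by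
    rw [Finset.mul_sum]
    exact Finset.sum_congr rfl fun i _ => by simp [smul_eq_mul]; ring
  rw [h, hw₀, mul_one, Real.sqrt_sq hR0]

/-- The box density is a good density when the center is far from the origin. -/
lemma bf_good {c : Fin ℓ → ℝ} (hc : Real.sqrt ℓ + 1 ≤ Real.sqrt (∑ i, (c i)^2)) :
    IsGoodDensity ℓ (bf ℓ c) := by
  have hEf : (1:ℝ) ≤ Ef ℓ (bf ℓ c) := by
    show (1:ℝ) ≤ ∫ w : Fin ℓ → ℝ, (∑ i, (w i)^2) * bf ℓ c w
    apply integral_mul_bf_ge cont_g1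
    intro w hw
    have h1 : (1:ℝ) ≤ Real.sqrt (∑ i, (w i)^2) := by
      have := box_norm_ge hw; linarith
    calc (1:ℝ) = 1 * 1 := (one_mul 1).symm
      _ ≤ Real.sqrt (∑ i, (w i)^2) * Real.sqrt (∑ i, (w i)^2) :=
          mul_le_mul h1 h1 (by norm_num) (Real.sqrt_nonneg _)
      _ = ∑ i, (w i)^2 := Real.mul_self_sqrt (sum_sq_nonneg w)
  exact ⟨bf_nonneg, bf_integrable, integral_bf, integrable_mul_bf cont_g1,
    lt_of_lt_of_le one_pos hEf, entropy_integrable_bf⟩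

lemma RMS_le_sigmaMax (F : Matrix (Fin s) (Fin ℓ) ℝ) {f : (Fin ℓ → ℝ) → ℝ}
    (hf : IsGoodDensity ℓ f) : RMS F f ≤ sigmaMax F := by
  have hσ0 : 0 ≤ sigmaMax F := sigmaMax_nonneg F
  have hptw : ∀ w, (∑ j, (F.mulVec w j)^2) * f w
      ≤ (sigmaMax F)^2 * ((∑ i, (w i)^2) * f w) := by
    intro w
    rw [← mul_assoc]
    exact mul_le_mul_of_nonneg_right (op_bound F w) (hf.nonneg w)
  have hint : Integrable fun w : Fin ℓ → ℝ => (∑ j, (F.mulVec w j)^2) * f w := by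
    apply Integrable.mono ((hf.moment_integrable).const_mul ((sigmaMax F)^2))
      ((cont_g2 F).aestronglyMeasurable.mul hf.integrable.aestronglyMeasurable)
    apply Filter.Eventually.of_forall
    intro w
    simp only [Pi.mul_apply]
    rw [Real.norm_eq_abs, Real.norm_eq_abs,
      abs_of_nonneg (mul_nonneg (sum_sq_nonneg _) (hf.nonneg w)),
      abs_of_nonneg (mul_nonneg (sq_nonneg _) (mul_nonneg (sum_sq_nonneg _) (hf.nonneg w)))]
    exact hptw w
  have hI : (∫ w : Fin ℓ → ℝ, (∑ j, (F.mulVec w j)^2) * f w)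
      ≤ (sigmaMax F)^2 * Ef ℓ f := by
    calc (∫ w : Fin ℓ → ℝ, (∑ j, (F.mulVec w j)^2) * f w)
        ≤ ∫ w : Fin ℓ → ℝ, (sigmaMax F)^2 * ((∑ i, (w i)^2) * f w) :=
          integral_mono hint ((hf.moment_integrable).const_mul _) hptw
      _ = (sigmaMax F)^2 * Ef ℓ f := integral_const_mul _ _
  have hdiv : (∫ w : Fin ℓ → ℝ, (∑ j, (F.mulVec w j)^2) * f w) / Ef ℓ f
      ≤ (sigmaMax F)^2 := (div_le_iff₀ hf.moment_pos).2 hI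
  calc RMS F f ≤ Real.sqrt ((sigmaMax F)^2) := Real.sqrt_le_sqrt hdiv
    _ = sigmaMax F := Real.sqrt_sq hσ0

lemma bf_RMS_ge (F : Matrix (Fin s) (Fin ℓ) ℝ) {w₀ : Fin ℓ → ℝ}
    (hw₀ : (∑ i, (w₀ i)^2) = 1) {R : ℝ} (hR : Real.sqrt ℓ + 1 ≤ R)
    (hRt : 0 ≤ R * Real.sqrt (∑ j, (F.mulVec w₀ j)^2)
        - Real.sqrt (∑ j, ∑ i, (F j i)^2) * Real.sqrt ℓ) :
    (R * Real.sqrt (∑ j, (F.mulVec w₀ j)^2)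
        - Real.sqrt (∑ j, ∑ i, (F j i)^2) * Real.sqrt ℓ) / (R + Real.sqrt ℓ)
      ≤ RMS F (bf ℓ (R • w₀)) := by
  set t := Real.sqrt (∑ j, (F.mulVec w₀ j)^2) with ht
  set K := Real.sqrt (∑ j, ∑ i, (F j i)^2) with hK
  set c := R • w₀ with hc
  set A := R * t - K * Real.sqrt ℓ with hA
  set B := R + Real.sqrt ℓ with hB
  have hsl : 0 ≤ Real.sqrt ℓ := Real.sqrt_nonneg _
  have hR0 : (0:ℝ) < R := by linarith
  have hBpos : 0 < B := by rw [hB]; linarith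
  have hcnorm : Real.sqrt (∑ i, (c i)^2) = R := smul_norm_eq hw₀ hR0.le
  have hFc : Real.sqrt (∑ j, (F.mulVec c j)^2) = R * t := by
    have h1 : ∑ j, (F.mulVec c j)^2 = R^2 * ∑ j, (F.mulVec w₀ j)^2 := by
      rw [hc, Matrix.mulVec_smul, Finset.mul_sum]
      exact Finset.sum_congr rfl fun j _ => by simp [smul_eq_mul]; ring
    rw [h1, Real.sqrt_mul (sq_nonneg R), Real.sqrt_sq hR0.le, ht]
  have hgood : IsGoodDensity ℓ (bf ℓ c) := bf_good (by rw [hcnorm]; exact hR)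
  have hEpos : 0 < Ef ℓ (bf ℓ c) := hgood.moment_pos
  -- lower bound for the numerator
  have hI2 : A^2 ≤ ∫ w : Fin ℓ → ℝ, (∑ j, (F.mulVec w j)^2) * bf ℓ c w := by
    apply integral_mul_bf_ge (cont_g2 F)
    intro w hw
    have h1 : A ≤ Real.sqrt (∑ j, (F.mulVec w j)^2) := by
      have := box_Fnorm_ge F hw
      rw [hFc] at this
      rw [hA]; linarith
    have h2 := pow_le_pow_left₀ hRt h1 2
    rwa [Real.sq_sqrt (sum_sq_nonneg _)] at h2
  -- upper bound for the second moment
  have hEle : Ef ℓ (bf ℓ c) ≤ B^2 := by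
    show (∫ w : Fin ℓ → ℝ, (∑ i, (w i)^2) * bf ℓ c w) ≤ B^2
    apply integral_mul_bf_le cont_g1
    intro w hw
    have h1 : Real.sqrt (∑ i, (w i)^2) ≤ B := by
      have := box_norm_le hw
      rw [hcnorm] at this
      rw [hB]; linarith
    have h2 := pow_le_pow_left₀ (Real.sqrt_nonneg _) h1 2
    rwa [Real.sq_sqrt (sum_sq_nonneg _)] at h2
  have hquot : A^2 / B^2 ≤
      (∫ w : Fin ℓ → ℝ, (∑ j, (F.mulVec w j)^2) * bf ℓ c w) / Ef ℓ (bf ℓ c) :=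
    div_le_div₀ (le_trans (sq_nonneg A) hI2) hI2 hEpos hEle
  calc A / B = Real.sqrt ((A/B)^2) := (Real.sqrt_sq (div_nonneg hRt hBpos.le)).symm
    _ = Real.sqrt (A^2 / B^2) := by rw [div_pow]
    _ ≤ RMS F (bf ℓ c) := Real.sqrt_le_sqrt hquot

end AnormAux
/-- The map `a ↦ ⦀F⦀_a` is nondecreasing on `[0,∞)`, bounded above by the largest
singular value `σ_max(F)`, and converges to `σ_max(F)` as `a → +∞`. -/
theorem anorm_monotone_bounded_tendsto
    (s ℓ : ℕ) (hℓ : 1 ≤ ℓ) (F : Matrix (Fin s) (Fin ℓ) ℝ) :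
    (∀ a b : ℝ, 0 ≤ a → a ≤ b → anorm a F ≤ anorm b F) ∧
    (∀ a : ℝ, 0 ≤ a → anorm a F ≤ sigmaMax F) ∧
    Filter.Tendsto (fun a : ℝ => anorm a F) Filter.atTop (nhds (sigmaMax F)) := by
  classical
  have hσ0 : 0 ≤ sigmaMax F := AnormAux.sigmaMax_nonneg F
  have hbdd : ∀ a : ℝ, BddAbove {x : ℝ | ∃ f : (Fin ℓ → ℝ) → ℝ,
      IsGoodDensity ℓ f ∧ aniso ℓ f ≤ a ∧ x = RMS F f} := fun a =>
    ⟨sigmaMax F, by rintro x ⟨f, hf, -, rfl⟩; exact AnormAux.RMS_le_sigmaMax F hf⟩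
  have hub : ∀ a : ℝ, anorm a F ≤ sigmaMax F := fun a =>
    Real.sSup_le (by rintro x ⟨f, hf, -, rfl⟩; exact AnormAux.RMS_le_sigmaMax F hf) hσ0
  have hmono : ∀ a b : ℝ, a ≤ b → anorm a F ≤ anorm b F := by
    intro a b hab
    by_cases hne : {x : ℝ | ∃ f : (Fin ℓ → ℝ) → ℝ,
        IsGoodDensity ℓ f ∧ aniso ℓ f ≤ a ∧ x = RMS F f}.Nonempty
    · exact csSup_le_csSup (hbdd b) hne
        (by rintro x ⟨f, hf, h1, rfl⟩; exact ⟨f, hf, h1.trans hab, rfl⟩)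
    · rw [Set.not_nonempty_iff_eq_empty] at hne
      have h0 : anorm a F = 0 := by unfold anorm; rw [hne, Real.sSup_empty]
      rw [h0]
      exact Real.sSup_nonneg (by rintro x ⟨f, hf, -, rfl⟩; exact Real.sqrt_nonneg _)
  refine ⟨fun a b _ hab => hmono a b hab, fun a _ => hub a, ?_⟩
  rw [tendsto_order]
  constructor
  · -- for every `y < σ_max F`, eventually `y < anorm a F`
    intro y hy
    obtain ⟨x, ⟨w₀, hw₀, rfl⟩, hyx⟩ :=
      exists_lt_of_lt_csSup (AnormAux.sigma_set_nonempty hℓ F) hy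
    set t := Real.sqrt (∑ j, (F.mulVec w₀ j)^2) with htdef
    set K := Real.sqrt (∑ j, ∑ i, (F j i)^2) with hKdef
    have hK0 : 0 ≤ K := Real.sqrt_nonneg _
    have hsl : 0 ≤ Real.sqrt ℓ := Real.sqrt_nonneg _
    rcases lt_or_ge y 0 with hy0 | hy0
    · -- trivial case:  y < 0 ≤ RMS
      set R := Real.sqrt ℓ + 1 with hRdef
      have hR : Real.sqrt ℓ + 1 ≤ R := le_refl _
      have hcn : Real.sqrt (∑ i, ((R • w₀) i)^2) = R :=
        AnormAux.smul_norm_eq hw₀ (by linarith)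
      have hgood : IsGoodDensity ℓ (AnormAux.bf ℓ (R • w₀)) :=
        AnormAux.bf_good (le_of_le_of_eq hR hcn.symm)
      refine Filter.eventually_atTop.2 ⟨aniso ℓ (AnormAux.bf ℓ (R • w₀)), fun a ha => ?_⟩
      have hmem : RMS F (AnormAux.bf ℓ (R • w₀)) ∈ {x : ℝ | ∃ f : (Fin ℓ → ℝ) → ℝ,
          IsGoodDensity ℓ f ∧ aniso ℓ f ≤ a ∧ x = RMS F f} :=
        ⟨AnormAux.bf ℓ (R • w₀), hgood, ha, rfl⟩
      have := le_csSup (hbdd a) hmem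
      calc y < 0 := hy0
        _ ≤ RMS F (AnormAux.bf ℓ (R • w₀)) := Real.sqrt_nonneg _
        _ ≤ anorm a F := this
    · -- main case: 0 ≤ y < t
      have hty : y < t := hyx
      set R := max (Real.sqrt ℓ + 1) ((K * Real.sqrt ℓ + y * Real.sqrt ℓ + 1) / (t - y))
        with hRdef
      have hR1 : Real.sqrt ℓ + 1 ≤ R := le_max_left _ _
      have hR0 : (0:ℝ) < R := by linarith
      have hR2 : K * Real.sqrt ℓ + y * Real.sqrt ℓ + 1 ≤ R * (t - y) := by
        have h := le_max_right (Real.sqrt ℓ + 1)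
          ((K * Real.sqrt ℓ + y * Real.sqrt ℓ + 1) / (t - y))
        rw [div_le_iff₀ (sub_pos.2 hty)] at h
        rw [← hRdef] at h
        exact h
      have hexp : R * (t - y) = R * t - R * y := by ring
      have hA : y * (R + Real.sqrt ℓ) + 1 ≤ R * t - K * Real.sqrt ℓ := by nlinarith
      have hRt : 0 ≤ R * t - K * Real.sqrt ℓ := by nlinarith
      have hlt : y < (R * t - K * Real.sqrt ℓ) / (R + Real.sqrt ℓ) := by
        rw [lt_div_iff₀ (by linarith : (0:ℝ) < R + Real.sqrt ℓ)]
        nlinarith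
      have hcn : Real.sqrt (∑ i, ((R • w₀) i)^2) = R :=
        AnormAux.smul_norm_eq hw₀ hR0.le
      have hgood : IsGoodDensity ℓ (AnormAux.bf ℓ (R • w₀)) :=
        AnormAux.bf_good (le_of_le_of_eq hR1 hcn.symm)
      have hRMS := AnormAux.bf_RMS_ge F hw₀ hR1 hRt
      refine Filter.eventually_atTop.2 ⟨aniso ℓ (AnormAux.bf ℓ (R • w₀)), fun a ha => ?_⟩
      have hmem : RMS F (AnormAux.bf ℓ (R • w₀)) ∈ {x : ℝ | ∃ f : (Fin ℓ → ℝ) → ℝ,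
          IsGoodDensity ℓ f ∧ aniso ℓ f ≤ a ∧ x = RMS F f} :=
        ⟨AnormAux.bf ℓ (R • w₀), hgood, ha, rfl⟩
      calc y < (R * t - K * Real.sqrt ℓ) / (R + Real.sqrt ℓ) := hlt
        _ ≤ RMS F (AnormAux.bf ℓ (R • w₀)) := hRMS
        _ ≤ anorm a F := le_csSup (hbdd a) hmem
  · intro y hy
    exact Filter.Eventually.of_forall fun a => lt_of_le_of_lt (hub a) hy
end
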